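/- Every section G/F of a regular incidence complex K, where F is an i-face and G a j-face with F ≤ G, is itself a regular incidence complex of rank j-i-1, and any two sections defined by pairs of faces of the same ranks are isomorphic. -/

import Mathlib

open Set Pointwise

/-- `Φ` is a flag of the subset `s` of the poset `α`: a chain contained in `s`
that is maximal among chains contained in `s`. -/
def IsFlagOf {α : Type*} [PartialOrder α] (s Φ : Set α) : Prop :=
  Φ ⊆ s ∧ IsChain (· ≤ ·) Φ ∧
    ∀ Ψ : Set α, Ψ ⊆ s → IsChain (· ≤ ·) Ψ → Φ ⊆ Ψ → Ψ = Φ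

/-- Two flags are adjacent if each differs from the other in exactly one face. -/
def FlagAdj {α : Type*} [PartialOrder α] (Φ Ψ : Set α) : Prop :=
  (Φ \ Ψ).ncard = 1 ∧ (Ψ \ Φ).ncard = 1

/-- The set `s` is flag-connected: any two flags of `s` are joined by a sequence
of successively adjacent flags of `s`. -/
def FlagConnIn {α : Type*} [PartialOrder α] (s : Set α) : Prop :=
  ∀ Φ Ψ : Set α, IsFlagOf s Φ → IsFlagOf s Ψ →
    Relation.ReflTransGen
      (fun A B => IsFlagOf s A ∧ IsFlagOf s B ∧ FlagAdj A B) Φ Ψ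

/-- The section between `F` and `G` is connected: any two of its proper faces are
joined by a finite sequence of successively incident proper faces of the section. -/
def ConnIn {α : Type*} [PartialOrder α] (F G : α) : Prop :=
  ∀ H K : α, F < H → H < G → F < K → K < G →
    Relation.ReflTransGen
      (fun a b => F < a ∧ a < G ∧ F < b ∧ b < G ∧ (a ≤ b ∨ b ≤ a)) H K

/-- An incidence complex of rank `n`: a bounded ranked poset (rank function `rk`
with range `{-1,…,n}`, strictly monotone, all flags having `n+2` elements hitting
every rank), strongly connected (I3), and with at least two `i`-faces between any
incident pair of faces of ranks `i-1` and `i+1` (I4). -/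
structure IncComplex (α : Type*) [PartialOrder α] [BoundedOrder α]
    (n : ℤ) (rk : α → ℤ) : Prop where
  rk_bot : rk (⊥ : α) = -1
  rk_top : rk (⊤ : α) = n
  rk_strictMono : ∀ a b : α, a < b → rk a < rk b
  chain_flag : ∀ c : Set α, IsChain (· ≤ ·) c →
    ∃ Φ : Set α, c ⊆ Φ ∧ IsFlagOf Set.univ Φ ∧ Φ.ncard = (n + 2).toNat
  flag_rk : ∀ Φ : Set α, IsFlagOf Set.univ Φ →
    ∀ i ∈ Set.Icc (-1 : ℤ) n, ∃ a ∈ Φ, rk a = i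
  strong_conn : ∀ F G : α, F ≤ G → 2 ≤ rk G - rk F - 1 → ConnIn F G
  two_between : ∀ F G : α, F < G → rk G = rk F + 2 →
    ∃ H H' : α, H ≠ H' ∧ F < H ∧ H < G ∧ F < H' ∧ H' < G

/-- A complex is regular if its automorphism group acts transitively on flags. -/
def IsRegularIC (α : Type*) [PartialOrder α] : Prop :=
  ∀ Φ Ψ : Set α, IsFlagOf Set.univ Φ → IsFlagOf Set.univ Ψ →
    ∃ g : α ≃o α, ⇑g '' Φ = Ψ

/-- `Γ` is a flag-transitive subgroup of the automorphism group. -/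
def FlagTrans {α : Type*} [PartialOrder α] (Γ : Subgroup (α ≃o α)) : Prop :=
  ∀ Φ Ψ : Set α, IsFlagOf Set.univ Φ → IsFlagOf Set.univ Ψ →
    ∃ g ∈ Γ, ⇑g '' Φ = Ψ

/-- The distinguished generating subset `R_i`: the stabilizer in `Γ` of
`Φ \ {F_i}`, where `F` enumerates the base flag by rank. -/
def Rset {α : Type*} [PartialOrder α] (Γ : Subgroup (α ≃o α)) (F : ℤ → α)
    (n i : ℤ) : Set (α ≃o α) :=
  {g | g ∈ Γ ∧ ∀ j ∈ Set.Icc (-1 : ℤ) n, j ≠ i → g (F j) = F j}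

/-- The bounded order structure on a section `Set.Icc F G`. -/
def sectionBoundedOrder {α : Type*} [PartialOrder α] {F G : α} (h : F ≤ G) :
    BoundedOrder ↥(Set.Icc F G) where
  top := ⟨G, ⟨h, le_rfl⟩⟩
  le_top x := x.2.2
  bot := ⟨F, ⟨le_rfl, h⟩⟩
  bot_le x := x.2.1

section Aux
variable {α : Type*} [PartialOrder α] [BoundedOrder α] {n : ℤ} {rk : α → ℤ}

lemma rk_le_of_le (hK : IncComplex α n rk) {a b : α} (h : a ≤ b) : rk a ≤ rk b := by
  rcases h.lt_or_eq with h | rfl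
  · exact (hK.rk_strictMono _ _ h).le
  · rfl

lemma rk_mem (hK : IncComplex α n rk) (a : α) : rk a ∈ Set.Icc (-1 : ℤ) n := by
  constructor
  · have := rk_le_of_le hK (bot_le : (⊥:α) ≤ a); rwa [hK.rk_bot] at this
  · have := rk_le_of_le hK (le_top : a ≤ (⊤:α)); rwa [hK.rk_top] at this

lemma hn_ge (hK : IncComplex α n rk) : -1 ≤ n := by
  have := rk_mem hK (⊥ : α); rw [hK.rk_bot] at this; exact this.2

lemma chain_le_of_rk_le (hK : IncComplex α n rk) {Φ : Set α} (hc : IsChain (· ≤ ·) Φ)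
    {a b : α} (ha : a ∈ Φ) (hb : b ∈ Φ) (h : rk a ≤ rk b) : a ≤ b := by
  rcases eq_or_ne a b with rfl | hne
  · rfl
  rcases hc ha hb hne with h' | h'
  · exact h'
  · rcases h'.lt_or_eq with h' | rfl
    · exact absurd (hK.rk_strictMono _ _ h') (by omega)
    · rfl

lemma chain_rk_injOn (hK : IncComplex α n rk) {Φ : Set α} (hc : IsChain (· ≤ ·) Φ) :
    Set.InjOn rk Φ := fun a ha b hb h =>
  le_antisymm (chain_le_of_rk_le hK hc ha hb h.le) (chain_le_of_rk_le hK hc hb ha h.ge)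

lemma flag_ncard (hK : IncComplex α n rk) {Φ : Set α} (hΦ : IsFlagOf Set.univ Φ) :
    Φ.ncard = (n + 2).toNat := by
  obtain ⟨Ψ, hsub, hΨ, hcard⟩ := hK.chain_flag Φ hΦ.2.1
  rwa [hΦ.2.2 Ψ (Set.subset_univ _) hΨ.2.1 hsub] at hcard

lemma flag_surjOn (hK : IncComplex α n rk) {Φ : Set α} (hΦ : IsFlagOf Set.univ Φ) :
    Set.SurjOn rk Φ (Set.Icc (-1 : ℤ) n) := by
  intro i hi
  obtain ⟨a, ha, h⟩ := hK.flag_rk Φ hΦ i hi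
  exact ⟨a, ha, h⟩

lemma Icc_ncard (a b : ℤ) : (Set.Icc a b).ncard = (b + 1 - a).toNat := by
  rw [← Finset.coe_Icc, Set.ncard_coe_finset, Int.card_Icc]

lemma flag_inter_Iic (hK : IncComplex α n rk) {Φ : Set α} (hΦ : IsFlagOf Set.univ Φ)
    {a : α} (ha : a ∈ Φ) : (Φ ∩ Set.Iic a).ncard = (rk a + 2).toNat := by
  have hbij : Set.BijOn rk (Φ ∩ Set.Iic a) (Set.Icc (-1 : ℤ) (rk a)) := by
    refine ⟨fun b hb => ⟨(rk_mem hK b).1, rk_le_of_le hK hb.2⟩,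
      (chain_rk_injOn hK hΦ.2.1).mono Set.inter_subset_left, ?_⟩
    intro i hi
    obtain ⟨b, hb, rfl⟩ := flag_surjOn hK hΦ ⟨hi.1, hi.2.trans (rk_mem hK a).2⟩
    exact ⟨b, ⟨hb, chain_le_of_rk_le hK hΦ.2.1 hb ha hi.2⟩, rfl⟩
  have h1 := Set.ncard_image_of_injOn hbij.2.1
  rw [hbij.image_eq, Icc_ncard] at h1
  rw [← h1]; congr 1; ring

lemma flag_image (g : α ≃o α) {Φ : Set α} (hΦ : IsFlagOf Set.univ Φ) :
    IsFlagOf Set.univ (⇑g '' Φ) := by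
  refine ⟨Set.subset_univ _, hΦ.2.1.image_of_map_rel _ _ _ (fun x y h => g.le_iff_le.mpr h), ?_⟩
  intro Ψ _ hΨc hsub
  have h2 : ⇑g.symm '' Ψ = Φ := by
    refine hΦ.2.2 _ (Set.subset_univ _)
      (hΨc.image_of_map_rel _ _ _ (fun x y h => g.symm.le_iff_le.mpr h)) ?_
    intro a ha
    exact ⟨g a, hsub ⟨a, ha, rfl⟩, g.symm_apply_apply a⟩
  calc Ψ = ⇑g '' (⇑g.symm '' Ψ) := by
        rw [Set.image_image]; simp
    _ = ⇑g '' Φ := by rw [h2]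

lemma rk_orderIso (hK : IncComplex α n rk) (g : α ≃o α) (a : α) : rk (g a) = rk a := by
  obtain ⟨Φ, hsub, hΦ, -⟩ := hK.chain_flag {a} (Set.Subsingleton.isChain (by simp))
  have ha : a ∈ Φ := hsub rfl
  have hΨ := flag_image g hΦ
  have hmem : g a ∈ ⇑g '' Φ := ⟨a, ha, rfl⟩
  have key : ⇑g '' Φ ∩ Set.Iic (g a) = ⇑g '' (Φ ∩ Set.Iic a) := by
    ext x
    constructor
    · rintro ⟨⟨b, hb, rfl⟩, hle⟩
      exact ⟨b, ⟨hb, g.le_iff_le.mp hle⟩, rfl⟩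
    · rintro ⟨b, ⟨hb, hle⟩, rfl⟩
      exact ⟨⟨b, hb, rfl⟩, g.le_iff_le.mpr hle⟩
  have h1 := flag_inter_Iic hK hΨ hmem
  rw [key, Set.ncard_image_of_injOn (g.injective.injOn), flag_inter_Iic hK hΦ ha] at h1
  have := (rk_mem hK a).1
  have := (rk_mem hK (g a)).1
  omega

lemma flag_mem_unique (hK : IncComplex α n rk) {Φ : Set α} (hΦ : IsFlagOf Set.univ Φ)
    {a b : α} (ha : a ∈ Φ) (hb : b ∈ Φ) (h : rk a = rk b) : a = b :=
  chain_rk_injOn hK hΦ.2.1 ha hb h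

lemma orderIso_fix (hK : IncComplex α n rk) (g : α ≃o α) {Φ Ψ : Set α}
    (hΨ : IsFlagOf Set.univ Ψ) (him : ⇑g '' Φ = Ψ)
    {a b : α} (ha : a ∈ Φ) (hb : b ∈ Ψ) (h : rk a = rk b) : g a = b := by
  refine flag_mem_unique hK hΨ (him ▸ ⟨a, ha, rfl⟩) hb ?_
  rw [rk_orderIso hK, h]

lemma pair_chain {F G : α} (hFG : F ≤ G) : IsChain (· ≤ ·) {F, G} := by
  intro x hx y hy _
  rcases hx with rfl | rfl <;> rcases hy with rfl | rfl <;>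
    simp [hFG, le_refl]

end Aux

section C
variable {α : Type*} [PartialOrder α] {F G : α}
lemma chain_val_preimage {Φ : Set α} (hc : IsChain (· ≤ ·) Φ) :
    IsChain (· ≤ ·) ((Subtype.val : ↥(Set.Icc F G) → α) ⁻¹' Φ) := by
  intro x hx y hy hne
  have := hc hx hy (fun h => hne (Subtype.coe_injective h))
  exact this.imp Subtype.coe_le_coe.mp Subtype.coe_le_coe.mp

lemma sec_preimage_flag {Φ : Set α} (hΦ : IsFlagOf Set.univ Φ)
    (hF : F ∈ Φ) (hG : G ∈ Φ) :
    IsFlagOf (Set.univ : Set ↥(Set.Icc F G)) (Subtype.val ⁻¹' Φ) := by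
  refine ⟨Set.subset_univ _, chain_val_preimage hΦ.2.1, ?_⟩
  intro Ψ _ hΨc hsub
  -- show val '' Ψ ⊆ Φ
  have hcross : ∀ x ∈ Φ, ∀ b : ↥(Set.Icc F G), b ∈ Ψ → x ≤ b.1 ∨ b.1 ≤ x := by
    intro x hx b hb
    rcases eq_or_ne x F with rfl | hxF
    · exact Or.inl b.2.1
    rcases hΦ.2.1 hx hF hxF with h | h
    · exact Or.inl (h.trans b.2.1)
    rcases eq_or_ne x G with rfl | hxG
    · exact Or.inr b.2.2
    rcases hΦ.2.1 hx hG hxG with h' | h'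
    · -- x ∈ Icc F G, so ⟨x,_⟩ ∈ Ψ
      have hxmem : (⟨x, h, h'⟩ : ↥(Set.Icc F G)) ∈ Ψ := hsub hx
      rcases eq_or_ne (⟨x, h, h'⟩ : ↥(Set.Icc F G)) b with rfl | hne
      · exact Or.inl le_rfl
      · exact (hΨc hxmem hb hne).imp Subtype.coe_le_coe.mpr Subtype.coe_le_coe.mpr
    · exact Or.inr (b.2.2.trans h')
  have hT : IsChain (· ≤ ·) (Φ ∪ Subtype.val '' Ψ) := by
    intro x hx y hy hne
    rcases hx with hx | ⟨a, ha, rfl⟩ <;> rcases hy with hy | hy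
    · exact hΦ.2.1 hx hy hne
    · obtain ⟨b, hb, rfl⟩ := hy
      exact hcross x hx b hb
    · exact (hcross y hy a ha).symm
    · obtain ⟨b, hb, rfl⟩ := hy
      have hab : a ≠ b := fun h => hne (by rw [h])
      exact (hΨc ha hb hab).imp Subtype.coe_le_coe.mpr Subtype.coe_le_coe.mpr
  have hTeq : Φ ∪ Subtype.val '' Ψ = Φ :=
    hΦ.2.2 _ (Set.subset_univ _) hT Set.subset_union_left
  refine Set.Subset.antisymm ?_ hsub
  intro b hb
  have : b.1 ∈ Φ ∪ Subtype.val '' Ψ := Or.inr ⟨b, hb, rfl⟩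
  rw [hTeq] at this
  exact this
end C

section D
variable {α : Type*} [PartialOrder α] [BoundedOrder α] {n : ℤ} {rk : α → ℤ} {F G : α}

/-- cardinality of the preimage flag -/
lemma sec_preimage_ncard (hK : IncComplex α n rk) {Φ : Set α} (hΦ : IsFlagOf Set.univ Φ)
    (hF : F ∈ Φ) (hG : G ∈ Φ) :
    ((Subtype.val : ↥(Set.Icc F G) → α) ⁻¹' Φ).ncard = (rk G - rk F + 1).toNat := by
  have himg : Subtype.val '' ((Subtype.val : ↥(Set.Icc F G) → α) ⁻¹' Φ) = Φ ∩ Set.Icc F G := by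
    rw [Set.image_preimage_eq_inter_range, Subtype.range_coe]
  have hbij : Set.BijOn rk (Φ ∩ Set.Icc F G) (Set.Icc (rk F) (rk G)) := by
    refine ⟨fun b hb => ⟨rk_le_of_le hK hb.2.1, rk_le_of_le hK hb.2.2⟩,
      (chain_rk_injOn hK hΦ.2.1).mono Set.inter_subset_left, ?_⟩
    intro i hi
    obtain ⟨b, hb, rfl⟩ := flag_surjOn hK hΦ ⟨(rk_mem hK F).1.trans hi.1, hi.2.trans (rk_mem hK G).2⟩
    exact ⟨b, ⟨hb, chain_le_of_rk_le hK hΦ.2.1 hF hb hi.1,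
      chain_le_of_rk_le hK hΦ.2.1 hb hG hi.2⟩, rfl⟩
  have h1 := Set.ncard_image_of_injOn hbij.2.1
  rw [hbij.image_eq, Icc_ncard] at h1
  have h2 := Set.ncard_image_of_injOn (Subtype.coe_injective.injOn :
    Set.InjOn Subtype.val ((Subtype.val : ↥(Set.Icc F G) → α) ⁻¹' Φ))
  rw [himg] at h2
  rw [← h2, ← h1]; congr 1; ring

/-- every chain of the section is contained in a flag of `α` containing `F` and `G` -/
lemma sec_chain_parent (hK : IncComplex α n rk) (hFG : F ≤ G)
    {c : Set ↥(Set.Icc F G)} (hc : IsChain (· ≤ ·) c) :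
    ∃ Φ : Set α, IsFlagOf Set.univ Φ ∧ F ∈ Φ ∧ G ∈ Φ ∧
      c ⊆ Subtype.val ⁻¹' Φ := by
  have hch : IsChain (· ≤ ·) (insert F (insert G (Subtype.val '' c))) := by
    intro x hx y hy hne
    have hmem : ∀ z ∈ insert F (insert G (Subtype.val '' c)), F ≤ z ∧ z ≤ G := by
      rintro z (rfl | rfl | ⟨b, hb, rfl⟩)
      · exact ⟨le_rfl, hFG⟩
      · exact ⟨hFG, le_rfl⟩
      · exact ⟨b.2.1, b.2.2⟩
    rcases hx with rfl | rfl | ⟨a, ha, rfl⟩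
    · exact Or.inl (hmem y hy).1
    · exact Or.inr (hmem y hy).2
    · rcases hy with rfl | rfl | ⟨b, hb, rfl⟩
      · exact Or.inr a.2.1
      · exact Or.inl a.2.2
      · have hab : a ≠ b := fun h => hne (by rw [h])
        exact (hc ha hb hab).imp Subtype.coe_le_coe.mpr Subtype.coe_le_coe.mpr
  obtain ⟨Φ, hsub, hΦ, -⟩ := hK.chain_flag _ hch
  refine ⟨Φ, hΦ, hsub (Set.mem_insert _ _),
    hsub (Set.mem_insert_of_mem _ (Set.mem_insert _ _)), ?_⟩
  intro b hb
  exact hsub (Set.mem_insert_of_mem _ (Set.mem_insert_of_mem _ ⟨b, hb, rfl⟩))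

/-- every flag of the section is the preimage of a flag of `α` containing `F,G` -/
lemma sec_flag_parent (hK : IncComplex α n rk) (hFG : F ≤ G)
    {Φ' : Set ↥(Set.Icc F G)} (hΦ' : IsFlagOf Set.univ Φ') :
    ∃ Φ : Set α, IsFlagOf Set.univ Φ ∧ F ∈ Φ ∧ G ∈ Φ ∧
      Subtype.val ⁻¹' Φ = Φ' := by
  obtain ⟨Φ, hΦ, hF, hG, hsub⟩ := sec_chain_parent hK hFG hΦ'.2.1
  exact ⟨Φ, hΦ, hF, hG, hΦ'.2.2 _ (Set.subset_univ _) (chain_val_preimage hΦ.2.1) hsub⟩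

end D

/-- Restriction of an order automorphism to an isomorphism of sections. -/
def mkIccIso {α : Type*} [PartialOrder α] {F G F' G' : α} (g : α ≃o α)
    (hgF : g F = F') (hgG : g G = G') : ↥(Set.Icc F G) ≃o ↥(Set.Icc F' G') where
  toFun x := ⟨g x.1, by
    constructor
    · rw [← hgF]; exact g.monotone x.2.1
    · rw [← hgG]; exact g.monotone x.2.2⟩
  invFun x := ⟨g.symm x.1, by
    constructor
    · rw [g.le_symm_apply, hgF]; exact x.2.1
    · rw [g.symm_apply_le, hgG]; exact x.2.2⟩
  left_inv x := Subtype.ext (g.symm_apply_apply x.1)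
  right_inv x := Subtype.ext (g.apply_symm_apply x.1)
  map_rel_iff' {a b} := by
    rw [← Subtype.coe_le_coe, ← Subtype.coe_le_coe]
    exact g.le_iff_le

lemma mkIccIso_image {α : Type*} [PartialOrder α] {F G F' G' : α} (g : α ≃o α)
    (hgF : g F = F') (hgG : g G = G') {Φ : Set α} {Ψ : Set α}
    (him : ⇑g '' Φ = Ψ) :
    ⇑(mkIccIso g hgF hgG) '' (Subtype.val ⁻¹' Φ) = Subtype.val ⁻¹' Ψ := by
  ext x
  constructor
  · rintro ⟨a, ha, rfl⟩
    show g a.1 ∈ Ψ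
    rw [← him]
    exact ⟨a.1, ha, rfl⟩
  · intro hx
    have : (x : α) ∈ ⇑g '' Φ := by rw [him]; exact hx
    obtain ⟨a, haΦ, hax⟩ := this
    have ham : a ∈ Set.Icc F G := by
      constructor
      · rw [← g.le_iff_le, hgF, hax]; exact x.2.1
      · rw [← g.le_iff_le, hgG, hax]; exact x.2.2
    exact ⟨⟨a, ham⟩, haΦ, Subtype.ext hax⟩

/-- Every section `G/F` of a regular incidence complex is itself a
regular incidence complex of rank `rk G - rk F - 1`, and any two sections defined
by faces of the same ranks are isomorphic. -/
theorem section_regular_and_isomorphic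
    {α : Type*} [PartialOrder α] [BoundedOrder α] (n : ℤ) (rk : α → ℤ)
    (hK : IncComplex α n rk) (hreg : IsRegularIC α)
    (F G : α) (hFG : F ≤ G) :
    (@IncComplex ↥(Set.Icc F G) _ (sectionBoundedOrder hFG)
        (rk G - rk F - 1) (fun x => rk x.1 - rk F - 1)) ∧
    IsRegularIC ↥(Set.Icc F G) ∧
    (∀ F' G' : α, F' ≤ G' → rk F' = rk F → rk G' = rk G →
      Nonempty (↥(Set.Icc F G) ≃o ↥(Set.Icc F' G'))) := by
  letI : BoundedOrder ↥(Set.Icc F G) := sectionBoundedOrder hFG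
  have hrkF := rk_mem hK F
  have hrkG := rk_mem hK G
  refine ⟨⟨?_, ?_, ?_, ?_, ?_, ?_, ?_⟩, ?_, ?_⟩
  · -- rk_bot
    show rk F - rk F - 1 = -1
    ring
  · -- rk_top
    show rk G - rk F - 1 = rk G - rk F - 1
    rfl
  · -- strictMono
    intro a b h
    have := hK.rk_strictMono a.1 b.1 (Subtype.coe_lt_coe.mpr h)
    omega
  · -- chain_flag
    intro c hc
    obtain ⟨Φ, hΦ, hF, hG, hsub⟩ := sec_chain_parent hK hFG hc
    refine ⟨Subtype.val ⁻¹' Φ, hsub, sec_preimage_flag hΦ hF hG, ?_⟩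
    rw [sec_preimage_ncard hK hΦ hF hG]
    congr 1; ring
  · -- flag_rk
    intro Φ' hΦ' i hi
    obtain ⟨Φ, hΦ, hF, hG, heq⟩ := sec_flag_parent hK hFG hΦ'
    have hi' : i + rk F + 1 ∈ Set.Icc (-1 : ℤ) n := by
      simp only [Set.mem_Icc] at hi hrkF hrkG ⊢
      omega
    obtain ⟨a, ha, hrka⟩ := hK.flag_rk Φ hΦ _ hi'
    simp only [Set.mem_Icc] at hi
    have hFa : F ≤ a := chain_le_of_rk_le hK hΦ.2.1 hF ha (by omega)
    have haG : a ≤ G := chain_le_of_rk_le hK hΦ.2.1 ha hG (by omega)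
    refine ⟨⟨a, hFa, haG⟩, ?_, by simp only []; omega⟩
    rw [← heq]
    exact ha
  · -- strong_conn
    intro F' G' hle hrk2 H K h1 h2 h3 h4
    have hc := hK.strong_conn F'.1 G'.1 (Subtype.coe_le_coe.mpr hle) (by omega)
    have hrtg := hc H.1 K.1 (Subtype.coe_lt_coe.mpr h1) (Subtype.coe_lt_coe.mpr h2)
      (Subtype.coe_lt_coe.mpr h3) (Subtype.coe_lt_coe.mpr h4)
    have trans : ∀ y : α, Relation.ReflTransGen
        (fun a b => F'.1 < a ∧ a < G'.1 ∧ F'.1 < b ∧ b < G'.1 ∧ (a ≤ b ∨ b ≤ a)) H.1 y →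
        ∀ hy : y ∈ Set.Icc F G,
        Relation.ReflTransGen
          (fun a b => F' < a ∧ a < G' ∧ F' < b ∧ b < G' ∧ (a ≤ b ∨ b ≤ a)) H ⟨y, hy⟩ := by
      intro y h
      induction h with
      | refl => intro hy; exact Relation.ReflTransGen.refl
      | @tail b c hxb hbc ih =>
        intro hy
        have hb : b ∈ Set.Icc F G :=
          ⟨F'.2.1.trans hbc.1.le, hbc.2.1.le.trans G'.2.2⟩
        refine (ih hb).tail ?_
        exact ⟨Subtype.coe_lt_coe.mp hbc.1, Subtype.coe_lt_coe.mp hbc.2.1,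
          Subtype.coe_lt_coe.mp hbc.2.2.1, Subtype.coe_lt_coe.mp hbc.2.2.2.1,
          hbc.2.2.2.2.imp Subtype.coe_le_coe.mp Subtype.coe_le_coe.mp⟩
    exact trans K.1 hrtg K.2
  · -- two_between
    intro F' G' hlt hrk2
    obtain ⟨H, H', hne, h1, h2, h3, h4⟩ :=
      hK.two_between F'.1 G'.1 (Subtype.coe_lt_coe.mpr hlt) (by omega)
    have hH : H ∈ Set.Icc F G := ⟨F'.2.1.trans h1.le, h2.le.trans G'.2.2⟩
    have hH' : H' ∈ Set.Icc F G := ⟨F'.2.1.trans h3.le, h4.le.trans G'.2.2⟩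
    exact ⟨⟨H, hH⟩, ⟨H', hH'⟩, fun h => hne (congrArg Subtype.val h),
      Subtype.coe_lt_coe.mp h1, Subtype.coe_lt_coe.mp h2,
      Subtype.coe_lt_coe.mp h3, Subtype.coe_lt_coe.mp h4⟩
  · -- regularity
    intro Φ' Ψ' hΦ' hΨ'
    obtain ⟨Φ, hΦ, hFΦ, hGΦ, hΦeq⟩ := sec_flag_parent hK hFG hΦ'
    obtain ⟨Ψ, hΨ, hFΨ, hGΨ, hΨeq⟩ := sec_flag_parent hK hFG hΨ'
    obtain ⟨g, hg⟩ := hreg Φ Ψ hΦ hΨ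
    have hgF : g F = F := orderIso_fix hK g hΨ hg hFΦ hFΨ rfl
    have hgG : g G = G := orderIso_fix hK g hΨ hg hGΦ hGΨ rfl
    refine ⟨mkIccIso g hgF hgG, ?_⟩
    rw [← hΦeq, ← hΨeq]
    exact mkIccIso_image g hgF hgG hg
  · -- isomorphism of sections
    intro F' G' hle hF' hG'
    obtain ⟨Φ1, hsub1, hΦ1, -⟩ := hK.chain_flag {F, G} (pair_chain hFG)
    obtain ⟨Φ2, hsub2, hΦ2, -⟩ := hK.chain_flag {F', G'} (pair_chain hle)
    obtain ⟨g, hg⟩ := hreg Φ1 Φ2 hΦ1 hΦ2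
    have hgF : g F = F' := orderIso_fix hK g hΦ2 hg (hsub1 (Set.mem_insert _ _))
      (hsub2 (Set.mem_insert _ _)) hF'.symm
    have hgG : g G = G' := orderIso_fix hK g hΦ2 hg
      (hsub1 (Set.mem_insert_of_mem _ rfl)) (hsub2 (Set.mem_insert_of_mem _ rfl)) hG'.symm
    exact ⟨mkIccIso g hgF hgG⟩
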